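/- Let f ∈ ℂ[x,y] be a primitive homogeneous polynomial of degree d > 1, i.e. f is not of the form g^r for any g ∈ ℂ[x,y] and any integer r > 1. Then C(f) = J_f/D_f is torsion free as a ℂ[t]-module: for every h ∈ J_f and every k ≥ 1, if f^k·h ∈ D_f then h ∈ D_f. -/

import Mathlib

open MvPolynomial

/-- Membership in `D_f = {f_x·∂g/∂y − f_y·∂g/∂x : g ∈ ℂ[x,y]}`. -/
def Dmem (f w : MvPolynomial (Fin 2) ℂ) : Prop :=
  ∃ g : MvPolynomial (Fin 2) ℂ,
    w = pderiv 0 f * pderiv 1 g - pderiv 1 f * pderiv 0 g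

namespace S7aux

open Finset

noncomputable section

abbrev R2 : Type := MvPolynomial (Fin 2) ℂ

/-- The "Poisson bracket" `f_x g_y - f_y g_x`. -/
def Pb (f g : R2) : R2 := pderiv 0 f * pderiv 1 g - pderiv 1 f * pderiv 0 g

lemma deg2 (m : Fin 2 →₀ ℕ) : m.degree = m 0 + m 1 := by
  classical
  rw [Finsupp.degree_apply]
  rw [Finset.sum_subset (Finset.subset_univ m.support)
    (fun i _ hi => Finsupp.notMem_support_iff.mp hi)]
  simp [Fin.sum_univ_two]

lemma single2 (i : Fin 2) : (Finsupp.single i 1 : Fin 2 →₀ ℕ) 0 + (Finsupp.single i 1 : Fin 2 →₀ ℕ) 1 = 1 := by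
  fin_cases i <;> simp

lemma homog_iff (p : R2) (n : ℕ) :
    p.IsHomogeneous n ↔ ∀ m : Fin 2 →₀ ℕ, coeff m p ≠ 0 → m.degree = n := by
  unfold MvPolynomial.IsHomogeneous IsWeightedHomogeneous
  constructor
  · intro H m hm; rw [Finsupp.degree_eq_weight_one]; exact H hm
  · intro H m hm; have := H m hm; rw [Finsupp.degree_eq_weight_one] at this; exact this

lemma Pb_f_mul (f w : R2) : Pb f (f * w) = f * Pb f w := by
  simp only [Pb, pderiv_mul]; ring

lemma Pb_zero (f : R2) : Pb f 0 = 0 := by simp [Pb]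

lemma Pb_sum (f : R2) (s : Finset ℕ) (t : ℕ → R2) :
    Pb f (∑ j ∈ s, t j) = ∑ j ∈ s, Pb f (t j) := by
  simp only [Pb, map_sum, Finset.mul_sum]
  rw [← Finset.sum_sub_distrib]


lemma coeff_pd (i : Fin 2) (p : R2) (m : Fin 2 →₀ ℕ) :
    coeff m (pderiv i p) = ((m i : ℂ) + 1) * coeff (m + Finsupp.single i 1) p := by
  classical
  induction p using MvPolynomial.induction_on' with
  | add p q hp hq => rw [map_add, coeff_add, coeff_add, hp, hq]; ring
  | monomial s a =>
    rw [pderiv_monomial]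
    rcases eq_or_ne s (m + Finsupp.single i 1) with h | h
    · subst h
      have h1 : (m + Finsupp.single i 1) - Finsupp.single i 1 = m := by
        ext j; rw [Finsupp.tsub_apply, Finsupp.add_apply]; omega
      have h2 : ((m + Finsupp.single i 1) : Fin 2 →₀ ℕ) i = m i + 1 := by
        rw [Finsupp.add_apply, Finsupp.single_eq_same]
      rw [coeff_monomial, coeff_monomial, h1, h2, if_pos rfl, if_pos rfl]
      push_cast; ring
    · rw [coeff_monomial, coeff_monomial, if_neg h]
      rcases eq_or_ne (s - Finsupp.single i 1) m with h2 | h2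
      · rw [if_pos h2]
        rcases Nat.eq_zero_or_pos (s i) with h3 | h3
        · simp [h3]
        · exfalso; apply h
          ext j
          have hthis := Finsupp.ext_iff.mp h2 j
          rw [Finsupp.tsub_apply] at hthis
          rw [Finsupp.add_apply]
          rcases eq_or_ne j i with rfl | hj
          · rw [Finsupp.single_eq_same] at hthis ⊢; omega
          · rw [Finsupp.single_eq_of_ne' (Ne.symm hj)] at hthis ⊢; omega
      · rw [if_neg h2, mul_zero]

lemma pd_homog {p : R2} {n : ℕ} (hp : p.IsHomogeneous n) (i : Fin 2) :
    (pderiv i p).IsHomogeneous (n - 1) := by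
  rw [homog_iff] at hp ⊢
  intro m hm
  rw [coeff_pd] at hm
  have h1 : coeff (m + Finsupp.single i 1) p ≠ 0 := by
    intro h; rw [h, mul_zero] at hm; exact hm rfl
  have h2 := hp _ h1
  rw [deg2] at h2 ⊢
  have h3 := single2 i
  simp only [Finsupp.add_apply] at h2
  omega

lemma euler {p : R2} {n : ℕ} (hp : p.IsHomogeneous n) :
    X 0 * pderiv 0 p + X 1 * pderiv 1 p = (n : R2) * p := by
  classical
  rw [homog_iff] at hp
  apply MvPolynomial.ext
  intro m
  have key : ∀ i : Fin 2, coeff m (X i * pderiv i p) = (m i : ℂ) * coeff m p := by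
    intro i
    rw [coeff_X_mul']
    by_cases h : i ∈ m.support
    · rw [if_pos h]
      rw [coeff_pd]
      have hmi : m i ≥ 1 := by
        rcases Finsupp.mem_support_iff.mp h with h'
        omega
      have h1 : ((m - Finsupp.single i 1) : Fin 2 →₀ ℕ) i = m i - 1 := by
        rw [Finsupp.tsub_apply, Finsupp.single_eq_same]
      have h2 : (m - Finsupp.single i 1) + Finsupp.single i 1 = m := by
        ext j
        rw [Finsupp.add_apply, Finsupp.tsub_apply]
        rcases eq_or_ne j i with rfl | hj
        · rw [Finsupp.single_eq_same]; omega
        · rw [Finsupp.single_eq_of_ne' (Ne.symm hj)]; omega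
      rw [h1, h2]
      congr 1
      push_cast
      rw [Nat.cast_sub hmi]
      push_cast; ring
    · rw [if_neg h]
      have : m i = 0 := Finsupp.notMem_support_iff.mp h
      rw [this]; simp
  rw [coeff_add, key 0, key 1]
  have hcast : ((n : R2)) = C (n : ℂ) := by
    simp [MvPolynomial.C_eq_coe_nat]
  rw [hcast, coeff_C_mul]
  rcases eq_or_ne (coeff m p) 0 with h | h
  · rw [h]; ring
  · have := hp m h
    rw [deg2] at this
    rw [← this]
    push_cast; ring

lemma pd_pow_mul (π : R2) (i : Fin 2) (n : ℕ) :
    π * pderiv i (π ^ n) = (n : R2) * π ^ n * pderiv i π := by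
  cases n with
  | zero => simp
  | succ k =>
    rw [pderiv_pow]
    have : (k + 1 : ℕ) - 1 = k := rfl
    rw [this]
    push_cast
    ring

-- homogeneous of degree 0 means constant
lemma homog_zero_pd {p : R2} (hp : p.IsHomogeneous 0) (i : Fin 2) : pderiv i p = 0 := by
  have h1 : homogeneousComponent 0 p = p :=
    (homogeneousComponent_of_mem (mem_homogeneousSubmodule _ _ |>.mpr hp)).trans (if_pos rfl)
  rw [← h1, homogeneousComponent_zero]
  exact pderiv_C

lemma comp_mul {q : R2} {c : ℕ} (hq : q.IsHomogeneous c) (t : R2) (n : ℕ) :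
    homogeneousComponent (n + c) (q * t) = q * homogeneousComponent n t := by
  conv_lhs => rw [← sum_homogeneousComponent t]
  rw [Finset.mul_sum, map_sum]
  have key : ∀ j ∈ Finset.range (t.totalDegree + 1),
      homogeneousComponent (n + c) (q * homogeneousComponent j t)
        = if j = n then q * homogeneousComponent j t else 0 := by
    intro j _
    have hmem : q * homogeneousComponent j t ∈ homogeneousSubmodule (Fin 2) ℂ (c + j) :=
      (mem_homogeneousSubmodule _ _).mpr (hq.mul (homogeneousComponent_isHomogeneous j t))
    rw [homogeneousComponent_of_mem hmem]
    congr 1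
    simp only [eq_iff_iff]
    omega
  rw [Finset.sum_congr rfl key, Finset.sum_ite_eq' (Finset.range (t.totalDegree + 1)) n
    (fun j => q * homogeneousComponent j t)]
  by_cases h : n ∈ Finset.range (t.totalDegree + 1)
  · rw [if_pos h]
  · rw [if_neg h]
    have : t.totalDegree < n := by simp at h; omega
    rw [homogeneousComponent_eq_zero _ _ this, mul_zero]

lemma comp_mul_zero {q : R2} {c : ℕ} (hq : q.IsHomogeneous c) (t : R2) (n : ℕ) (hn : n < c) :
    homogeneousComponent n (q * t) = 0 := by
  conv_lhs => rw [← sum_homogeneousComponent t]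
  rw [Finset.mul_sum, map_sum]
  apply Finset.sum_eq_zero
  intro j _
  have hmem : q * homogeneousComponent j t ∈ homogeneousSubmodule (Fin 2) ℂ (c + j) :=
    (mem_homogeneousSubmodule _ _).mpr (hq.mul (homogeneousComponent_isHomogeneous j t))
  rw [homogeneousComponent_of_mem hmem, if_neg (by omega)]

lemma comp_mul_dvd {q : R2} {c : ℕ} (hq : q.IsHomogeneous c) (t : R2) (n : ℕ) :
    q ∣ homogeneousComponent n (q * t) := by
  conv_rhs => rw [← sum_homogeneousComponent t]
  rw [Finset.mul_sum, map_sum]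
  apply Finset.dvd_sum
  intro j _
  have hmem : q * homogeneousComponent j t ∈ homogeneousSubmodule (Fin 2) ℂ (c + j) :=
    (mem_homogeneousSubmodule _ _).mpr (hq.mul (homogeneousComponent_isHomogeneous j t))
  rw [homogeneousComponent_of_mem hmem]
  split
  · exact Dvd.intro _ rfl
  · exact dvd_zero q

lemma comp_Pb {f : R2} {d : ℕ} (hd : 1 ≤ d) (hf : f.IsHomogeneous d) (g : R2) (m : ℕ) :
    homogeneousComponent (m + d) (Pb f g) = Pb f (homogeneousComponent (m + 2) g) := by
  conv_lhs => rw [← sum_homogeneousComponent g, Pb_sum, map_sum]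
  have key : ∀ j ∈ Finset.range (g.totalDegree + 1),
      homogeneousComponent (m + d) (Pb f (homogeneousComponent j g))
        = if j = m + 2 then Pb f (homogeneousComponent j g) else 0 := by
    intro j _
    cases j with
    | zero =>
      have h0 : Pb f (homogeneousComponent 0 g) = 0 := by
        unfold Pb
        rw [homog_zero_pd (homogeneousComponent_isHomogeneous 0 g) 0,
          homog_zero_pd (homogeneousComponent_isHomogeneous 0 g) 1]
        ring
      rw [h0, map_zero, if_neg (by omega)]
    | succ k =>
      have hmem : Pb f (homogeneousComponent (k+1) g)
          ∈ homogeneousSubmodule (Fin 2) ℂ ((d - 1) + k) := by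
        apply Submodule.sub_mem
        · exact (mem_homogeneousSubmodule _ _).mpr
            ((pd_homog hf 0).mul (by simpa using pd_homog (homogeneousComponent_isHomogeneous (k+1) g) 1))
        · exact (mem_homogeneousSubmodule _ _).mpr
            ((pd_homog hf 1).mul (by simpa using pd_homog (homogeneousComponent_isHomogeneous (k+1) g) 0))
      rw [homogeneousComponent_of_mem hmem]
      congr 1
      simp only [eq_iff_iff]
      omega
  rw [Finset.sum_congr rfl key, Finset.sum_ite_eq' (Finset.range (g.totalDegree + 1)) (m+2)
    (fun j => Pb f (homogeneousComponent j g))]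
  by_cases h : m + 2 ∈ Finset.range (g.totalDegree + 1)
  · rw [if_pos h]
  · rw [if_neg h]
    have : g.totalDegree < m + 2 := by simp at h; omega
    rw [homogeneousComponent_eq_zero _ _ this, Pb_zero]

lemma coeff_iter (i : Fin 2) (k : ℕ) (p : R2) (m : Fin 2 →₀ ℕ) :
    ∃ c : ℕ, c ≠ 0 ∧ coeff m ((pderiv i)^[k] p) = (c : ℂ) * coeff (m + Finsupp.single i k) p := by
  induction k generalizing p with
  | zero => exact ⟨1, one_ne_zero, by simp⟩
  | succ k ih =>
    rw [Function.iterate_succ_apply]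
    obtain ⟨c, hc, hcoef⟩ := ih (pderiv i p)
    refine ⟨c * (m i + k + 1), by positivity, ?_⟩
    rw [hcoef, coeff_pd]
    have h1 : ((m + Finsupp.single i k : Fin 2 →₀ ℕ)) i = m i + k := by
      rw [Finsupp.add_apply, Finsupp.single_eq_same]
    have h2 : (m + Finsupp.single i k) + Finsupp.single i 1 = m + Finsupp.single i (k+1) := by
      rw [add_assoc, ← Finsupp.single_add]
    rw [h1, h2]
    push_cast; ring

lemma prime_no_dvd_pderiv (π : R2) (hp : Prime π)
    (h0 : π ∣ pderiv 0 π) (h1 : π ∣ pderiv 1 π) : False := by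
  classical
  have hπ0 : π ≠ 0 := hp.ne_zero
  have hclose : ∀ (i : Fin 2) (w : R2), π ∣ w → π ∣ pderiv i w := by
    intro i w hw
    obtain ⟨t, rfl⟩ := hw
    rw [pderiv_mul]
    exact dvd_add (dvd_mul_of_dvd_left (by fin_cases i <;> assumption) t) (dvd_mul_right π _)
  have hiter : ∀ (i : Fin 2) (k : ℕ) (w : R2), π ∣ w → π ∣ (pderiv i)^[k] w := by
    intro i k
    induction k with
    | zero => intro w hw; simpa using hw
    | succ k ih =>
      intro w hw
      rw [Function.iterate_succ_apply]
      exact ih _ (hclose i w hw)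
  -- pick a top-degree monomial
  have hsupp : π.support.Nonempty := Finset.nonempty_iff_ne_empty.mpr (mt support_eq_empty.mp hπ0)
  obtain ⟨m, hm, hdeg⟩ := Finset.exists_mem_eq_sup π.support hsupp
    (fun s : Fin 2 →₀ ℕ => s.sum fun _ e => e)
  set q : R2 := (pderiv 0)^[m 0] ((pderiv 1)^[m 1] π) with hq
  have hπq : π ∣ q := hiter 0 (m 0) _ (hiter 1 (m 1) π dvd_rfl)
  have hsum : ∀ s : Fin 2 →₀ ℕ, (s.sum fun _ e => e) = s.degree := by
    intro s; rw [Finsupp.degree_apply]; rfl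
  have hN : π.totalDegree = m.degree := by
    rw [totalDegree, hdeg, hsum]
  -- coefficient computation
  have key : ∀ m' : Fin 2 →₀ ℕ, ∃ c : ℕ, c ≠ 0 ∧
      coeff m' q = (c : ℂ) * coeff (m' + Finsupp.single 0 (m 0) + Finsupp.single 1 (m 1)) π := by
    intro m'
    obtain ⟨c1, hc1, h1'⟩ := coeff_iter 0 (m 0) ((pderiv 1)^[m 1] π) m'
    obtain ⟨c2, hc2, h2'⟩ := coeff_iter 1 (m 1) π (m' + Finsupp.single 0 (m 0))
    exact ⟨c1 * c2, by positivity, by rw [hq, h1', h2']; push_cast; ring⟩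
  have hsingle : (0 : Fin 2 →₀ ℕ) + Finsupp.single 0 (m 0) + Finsupp.single 1 (m 1) = m := by
    ext j
    fin_cases j <;> simp
  -- q is a nonzero constant
  have hc0 : coeff 0 q ≠ 0 := by
    obtain ⟨c, hc, hcoef⟩ := key 0
    rw [hcoef, hsingle]
    exact mul_ne_zero (Nat.cast_ne_zero.mpr hc) (Finsupp.mem_support_iff.mp hm)
  have hqC : q = C (coeff 0 q) := by
    apply MvPolynomial.ext
    intro m'
    rcases eq_or_ne m' 0 with rfl | hm'
    · simp
    · rw [coeff_C, if_neg (Ne.symm hm')]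
      obtain ⟨c, hc, hcoef⟩ := key m'
      rw [hcoef]
      have hbig : π.totalDegree <
          ((m' + Finsupp.single 0 (m 0) + Finsupp.single 1 (m 1)) : Fin 2 →₀ ℕ).degree := by
        rw [hN]
        rw [deg2, deg2]
        simp only [Finsupp.add_apply]
        have hd' : m' 0 + m' 1 ≠ 0 := by
          intro h
          apply hm'
          ext j
          fin_cases j <;> simp <;> omega
        simp only [Finsupp.single_eq_same, Finsupp.single_eq_of_ne' (by decide : (0:Fin 2) ≠ 1),
          Finsupp.single_eq_of_ne' (by decide : (1:Fin 2) ≠ 0)]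
        omega
      have := coeff_eq_zero_of_totalDegree_lt (f := π)
        (d := m' + Finsupp.single 0 (m 0) + Finsupp.single 1 (m 1)) (by rw [← hsum] at hbig; exact hbig)
      rw [this, mul_zero]
  -- contradiction: π divides a nonzero constant
  have hunit : IsUnit q := by
    rw [hqC]
    exact (Ne.isUnit hc0).map C
  exact hp.not_isUnit (isUnit_of_dvd_unit hπq hunit)

lemma dvd_of_prime_pow_dvd {α : Type*} [CommMonoidWithZero α] [IsCancelMulZero α]
    [UniqueFactorizationMonoid α] {f : α} (hf : f ≠ 0) :
    ∀ {g : α}, g ≠ 0 → (∀ p n, Prime p → p ^ n ∣ f → p ^ n ∣ g) → f ∣ g := by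
  induction f using UniqueFactorizationMonoid.induction_on_prime with
  | h₁ => exact absurd rfl hf
  | h₂ u hu => exact fun _ _ => hu.dvd
  | h₃ f' p hf' hp ih =>
    intro g hg H
    have hpg : p ∣ g := by
      simpa using H p 1 hp (by simpa using dvd_mul_right p f')
    obtain ⟨g₁, rfl⟩ := hpg
    have hg₁ : g₁ ≠ 0 := fun h => hg (by rw [h, mul_zero])
    have hf'0 : f' ≠ 0 := fun h => hf (by rw [h, mul_zero])
    refine mul_dvd_mul_left p (ih hf'0 hg₁ ?_)
    intro q n hq hqf'
    by_cases hqp : q ∣ p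
    · obtain ⟨u, hu⟩ := hq.associated_of_dvd hp hqp
      have h1 : q ^ (n + 1) ∣ p * f' := by
        rw [← hu, pow_succ']
        rw [mul_assoc]
        exact mul_dvd_mul_left q (hqf'.mul_left _)
      have h2 : q ^ (n + 1) ∣ p * g₁ := H q (n + 1) hq h1
      rw [← hu, pow_succ', mul_assoc] at h2
      have h3 : q ^ n ∣ ↑u * g₁ := (mul_dvd_mul_iff_left hq.ne_zero).mp h2
      exact (Units.dvd_mul_left).mp h3
    · exact hq.pow_dvd_of_dvd_mul_left n hqp (H q n hq (hqf'.mul_left p))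

set_option maxHeartbeats 2000000 in
lemma core {f g h : R2} {d e : ℕ} (hd : 1 ≤ d) (hde : d ≤ e)
    (hf : f.IsHomogeneous d) (hg : g.IsHomogeneous e) (hf0 : f ≠ 0)
    (heq : f * h = Pb f g)
    (hh : h ∈ Ideal.span ({pderiv 0 f, pderiv 1 f} : Set R2)) :
    f ∣ g := by
  rcases eq_or_ne g 0 with rfl | hg0
  · exact dvd_zero f
  apply dvd_of_prime_pow_dvd hf0 hg0
  intro π n hπ hπnf
  rcases Nat.eq_zero_or_pos n with rfl | hn
  · simpa using one_dvd g
  -- max power of π in f and g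
  obtain ⟨A, u, hu, hfu⟩ := WfDvdMonoid.max_power_factor' hf0 hπ.not_isUnit
  obtain ⟨B, v, hv, hgv⟩ := WfDvdMonoid.max_power_factor' hg0 hπ.not_isUnit
  have hπ0 : π ≠ 0 := hπ.ne_zero
  have hnA : n ≤ A := by
    by_contra h'
    push_neg at h'
    have h1 : π ^ (A + 1) ∣ f := dvd_trans (pow_dvd_pow π (by omega)) hπnf
    rw [hfu, pow_succ] at h1
    exact hu ((mul_dvd_mul_iff_left (pow_ne_zero A hπ0)).mp h1)
  suffices hAB : A ≤ B by
    calc π ^ n ∣ π ^ B := pow_dvd_pow π (le_trans hnA hAB)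
    _ ∣ g := by rw [hgv]; exact dvd_mul_right _ _
  by_contra hBA'
  push_neg at hBA'
  -- A ≥ 1
  have hA1 : 1 ≤ A := by
    by_contra hA0
    push_neg at hA0
    interval_cases A
    · apply hu
      have : π ∣ f := dvd_trans (dvd_pow_self π (by omega : n ≠ 0)) hπnf
      rwa [hfu, pow_zero, one_mul] at this
  obtain ⟨a, rfl⟩ : ∃ a, A = a + 1 := ⟨A - 1, by omega⟩
  have hBa : B ≤ a := by omega
  obtain ⟨t, rfl⟩ : ∃ t, a = B + t := ⟨a - B, by omega⟩
  set px := pderiv (0 : Fin 2) π with hpx_def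
  set py := pderiv (1 : Fin 2) π with hpy_def
  set ux := pderiv (0 : Fin 2) u with hux_def
  set uy := pderiv (1 : Fin 2) u with huy_def
  set vx := pderiv (0 : Fin 2) v with hvx_def
  set vy := pderiv (1 : Fin 2) v with hvy_def
  -- π^a divides h
  have hfx : ∀ i : Fin 2, π ^ (B + t) ∣ pderiv i f := by
    intro i
    rw [hfu, pderiv_mul, pderiv_pow]
    refine dvd_add ⟨((B + t + 1 : ℕ) : R2) * pderiv i π * u, ?_⟩ ⟨π * pderiv i u, ?_⟩
    · have : (B + t + 1 : ℕ) - 1 = B + t := by omega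
      rw [this]; ring
    · ring
  obtain ⟨ha, hb, hab⟩ := Ideal.mem_span_pair.mp hh
  have hdvdh : π ^ (B + t) ∣ h := by
    rw [← hab]
    exact dvd_add (Dvd.dvd.mul_left (hfx 0) ha) (Dvd.dvd.mul_left (hfx 1) hb)
  obtain ⟨h₁, hh₁⟩ := hdvdh
  -- the two rewriting identities
  have hπf : ∀ i : Fin 2, π * pderiv i f
      = π ^ (B + t + 1) * (((B + t + 1 : ℕ) : R2) * pderiv i π * u + π * pderiv i u) := by
    intro i
    rw [hfu, pderiv_mul]
    linear_combination u * pd_pow_mul π i (B + t + 1)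
  have hπg : ∀ i : Fin 2, π * pderiv i g
      = π ^ B * (((B : ℕ) : R2) * pderiv i π * v + π * pderiv i v) := by
    intro i
    rw [hgv, pderiv_mul]
    linear_combination v * pd_pow_mul π i B
  -- main divisibility: π ∣ W'
  set A1 : R2 := ((B + t + 1 : ℕ) : R2) with hA1_def
  set B1 : R2 := ((B : ℕ) : R2) with hB1_def
  set W : R2 := A1 * u * (px * vy - py * vx) - B1 * v * (px * uy - py * ux)
    + π * (ux * vy - uy * vx) with hW_def
  have hmain : π ^ (2*B + t + 2) * W = π ^ (2*B + t + 2) * (π ^ (t + 1) * (u * h₁)) := by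
    have e1 : (π * pderiv 0 f) * (π * pderiv 1 g) - (π * pderiv 1 f) * (π * pderiv 0 g)
        = π ^ (2*B + t + 2) * W := by
      rw [hπf 0, hπf 1, hπg 0, hπg 1, hW_def]
      ring
    have e2 : (π * pderiv 0 f) * (π * pderiv 1 g) - (π * pderiv 1 f) * (π * pderiv 0 g)
        = π ^ 2 * (f * h) := by
      rw [heq]; unfold Pb; ring
    have e3 : π ^ 2 * (f * h) = π ^ (2*B + t + 2) * (π ^ (t + 1) * (u * h₁)) := by
      rw [hfu, hh₁]; ring
    rw [← e1, e2, e3]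
  have hW : W = π ^ (t + 1) * (u * h₁) :=
    mul_left_cancel₀ (pow_ne_zero _ hπ0) hmain
  have hπW' : π ∣ A1 * u * (px * vy - py * vx) - B1 * v * (px * uy - py * ux) := by
    have h1 : π ∣ W := by rw [hW]; exact ⟨π ^ t * (u * h₁), by ring⟩
    have h2 : π ∣ π * (ux * vy - uy * vx) := dvd_mul_right _ _
    have := dvd_sub h1 h2
    rw [hW_def] at this
    convert this using 1
    ring
  -- Euler equations
  have hEf := euler hf
  have hEg := euler hg
  have eqF : A1 * ((X 0 * px + X 1 * py) * u) + π * (X 0 * ux + X 1 * uy)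
      = ((d : ℕ) : R2) * (π * u) := by
    apply mul_left_cancel₀ (pow_ne_zero (B + t + 1) hπ0)
    linear_combination (-(X 0)) * hπf 0 - X 1 * hπf 1 + π * hEf + ((d:ℕ):R2) * π * hfu
  have hdvd1 : π ∣ A1 * ((X 0 * px + X 1 * py) * u) :=
    ⟨((d:ℕ):R2) * u - (X 0 * ux + X 1 * uy), by linear_combination eqF⟩
  have hA1cast : A1 = C (((B + t + 1 : ℕ)) : ℂ) := by simp [hA1_def, C_eq_coe_nat]
  have hA1unit : IsUnit A1 := by
    rw [hA1cast]
    exact (Ne.isUnit (by exact_mod_cast Nat.succ_ne_zero (B+t) : ((B+t+1:ℕ):ℂ) ≠ 0)).map C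
  have hdvd2 : π ∣ (X 0 * px + X 1 * py) * u :=
    (hπ.dvd_mul.mp hdvd1).resolve_left
      (fun hA => hπ.not_isUnit (isUnit_of_dvd_unit hA hA1unit))
  have hdvd3 : π ∣ X 0 * px + X 1 * py := (hπ.dvd_mul.mp hdvd2).resolve_right hu
  obtain ⟨s, hs⟩ := hdvd3
  have eqU : X 0 * ux + X 1 * uy = ((d:ℕ):R2) * u - A1 * (s * u) := by
    apply mul_left_cancel₀ hπ0
    linear_combination eqF - A1 * u * hs
  have eqG : B1 * ((X 0 * px + X 1 * py) * v) + π * (X 0 * vx + X 1 * vy)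
      = ((e : ℕ) : R2) * (π * v) := by
    apply mul_left_cancel₀ (pow_ne_zero B hπ0)
    linear_combination (-(X 0)) * hπg 0 - X 1 * hπg 1 + π * hEg + ((e:ℕ):R2) * π * hgv
  have eqV : X 0 * vx + X 1 * vy = ((e:ℕ):R2) * v - B1 * (s * v) := by
    apply mul_left_cancel₀ hπ0
    linear_combination eqG - B1 * v * hs
  set W' : R2 := A1 * u * (px * vy - py * vx) - B1 * v * (px * uy - py * ux) with hW'_def
  have hkey0 : X 0 * W' = π * (s * (A1 * u * vy - B1 * v * uy))
      + (B1 * ((d:ℕ):R2) - A1 * ((e:ℕ):R2)) * (py * (u * v)) := by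
    rw [hW'_def]
    linear_combination (A1 * u * vy - B1 * v * uy) * hs - A1 * u * py * eqV + B1 * v * py * eqU
  have hkey1 : X 1 * W' = π * (s * (B1 * v * ux - A1 * u * vx))
      + (A1 * ((e:ℕ):R2) - B1 * ((d:ℕ):R2)) * (px * (u * v)) := by
    rw [hW'_def]
    linear_combination (B1 * v * ux - A1 * u * vx) * hs + A1 * u * px * eqV - B1 * v * px * eqU
  have hz : (B1 * ((d:ℕ):R2) - A1 * ((e:ℕ):R2))
      = C (((B*d : ℕ) : ℂ) - (((B+t+1)*e : ℕ) : ℂ)) := by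
    rw [hA1cast, hB1_def]
    rw [show ((B:ℕ):R2) = C ((B:ℕ):ℂ) from by simp [C_eq_coe_nat],
        show ((d:ℕ):R2) = C ((d:ℕ):ℂ) from by simp [C_eq_coe_nat],
        show ((e:ℕ):R2) = C ((e:ℕ):ℂ) from by simp [C_eq_coe_nat],
        ← map_mul, ← map_mul, ← map_sub]
    congr 1
    push_cast
    ring
  have hlt : B * d < (B+t+1) * e := by nlinarith
  have hzne : (((B*d:ℕ):ℂ) - (((B+t+1)*e:ℕ):ℂ)) ≠ 0 := by
    intro hcc
    have : ((B*d:ℕ):ℂ) = (((B+t+1)*e:ℕ):ℂ) := sub_eq_zero.mp hcc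
    have : (B*d:ℕ) = ((B+t+1)*e : ℕ) := by exact_mod_cast this
    omega
  have hzunit : IsUnit (B1 * ((d:ℕ):R2) - A1 * ((e:ℕ):R2)) := by
    rw [hz]; exact hzne.isUnit.map C
  have huv : ∀ w : R2, π ∣ w * (u * v) → π ∣ w := by
    intro w hw
    rcases hπ.dvd_mul.mp hw with h' | h'
    · exact h'
    · rcases hπ.dvd_mul.mp h' with h'' | h''
      · exact absurd h'' hu
      · exact absurd h'' hv
  have hpy' : π ∣ py := by
    apply huv
    have h2 := dvd_sub (Dvd.dvd.mul_left hπW' (X 0)) (dvd_mul_right π (s * (A1 * u * vy - B1 * v * uy)))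
    have h3 : X 0 * W' - π * (s * (A1 * u * vy - B1 * v * uy))
        = (B1 * ((d:ℕ):R2) - A1 * ((e:ℕ):R2)) * (py * (u * v)) := by
      linear_combination hkey0
    rw [hW'_def] at h3
    rw [h3] at h2
    exact (hπ.dvd_mul.mp h2).resolve_left
      (fun hA => hπ.not_isUnit (isUnit_of_dvd_unit hA hzunit))
  have hpx' : π ∣ px := by
    apply huv
    have h2 := dvd_sub (Dvd.dvd.mul_left hπW' (X 1)) (dvd_mul_right π (s * (B1 * v * ux - A1 * u * vx)))
    have h3 : X 1 * W' - π * (s * (B1 * v * ux - A1 * u * vx))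
        = (A1 * ((e:ℕ):R2) - B1 * ((d:ℕ):R2)) * (px * (u * v)) := by
      linear_combination hkey1
    rw [hW'_def] at h3
    rw [h3] at h2
    rcases hπ.dvd_mul.mp h2 with hA | h4
    · exfalso
      apply hπ.not_isUnit
      apply isUnit_of_dvd_unit hA
      have : (A1 * ((e:ℕ):R2) - B1 * ((d:ℕ):R2)) = -(B1 * ((d:ℕ):R2) - A1 * ((e:ℕ):R2)) := by ring
      rw [this]
      exact hzunit.neg
    · exact h4
  exact prime_no_dvd_pderiv π hπ hpx' hpy'

lemma step {f : R2} {d : ℕ} (hd : 1 < d) (hf : f.IsHomogeneous d) (hf0 : f ≠ 0)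
    {h : R2} (hh : h ∈ Ideal.span ({pderiv 0 f, pderiv 1 f} : Set R2))
    (hD : ∃ g, f * h = Pb f g) : ∃ g', h = Pb f g' := by
  obtain ⟨g, hg⟩ := hD
  obtain ⟨pa, pb, hab⟩ := Ideal.mem_span_pair.mp hh
  have hfx : (pderiv 0 f).IsHomogeneous (d-1) := pd_homog hf 0
  have hfy : (pderiv 1 f).IsHomogeneous (d-1) := pd_homog hf 1
  have comp : ∀ m : ℕ, ∃ w, homogeneousComponent m h = Pb f w := by
    intro m
    obtain ⟨w1, hw1⟩ := comp_mul_dvd hfx pa m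
    obtain ⟨w2, hw2⟩ := comp_mul_dvd hfy pb m
    have hsplit : homogeneousComponent m h
        = pderiv 0 f * w1 + pderiv 1 f * w2 := by
      rw [← hab, ← hw1, ← hw2, ← map_add]
      congr 1
      ring
    have hmem : homogeneousComponent m h ∈ Ideal.span ({pderiv 0 f, pderiv 1 f} : Set R2) :=
      Ideal.mem_span_pair.mpr ⟨w1, w2, by rw [hsplit]; ring⟩
    rcases eq_or_ne (homogeneousComponent m h) 0 with h0 | h0
    · exact ⟨0, by rw [h0, Pb_zero]⟩
    have hm : d - 1 ≤ m := by
      by_contra hlt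
      push_neg at hlt
      apply h0
      rw [← hab, map_add, mul_comm pa, mul_comm pb,
        comp_mul_zero hfx pa m hlt, comp_mul_zero hfy pb m hlt, add_zero]
    have hfh : f * homogeneousComponent m h = Pb f (homogeneousComponent (m+2) g) := by
      have hcomp := congrArg (homogeneousComponent (m + d)) hg
      rwa [comp_mul hf h m, comp_Pb (by omega) hf g m] at hcomp
    have hcore : f ∣ homogeneousComponent (m+2) g :=
      core (by omega) (by omega) hf (homogeneousComponent_isHomogeneous _ _) hf0 hfh hmem
    obtain ⟨w, hw⟩ := hcore
    refine ⟨w, ?_⟩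
    apply mul_left_cancel₀ hf0
    rw [hfh, hw, Pb_f_mul]
  choose w hw using comp
  refine ⟨∑ m ∈ Finset.range (h.totalDegree + 1), w m, ?_⟩
  rw [Pb_sum]
  conv_lhs => rw [← sum_homogeneousComponent h]
  exact Finset.sum_congr rfl (fun m _ => hw m)


end

end S7aux

/-- For `f ∈ ℂ[x,y]` primitive homogeneous of degree `d > 1`
(not a proper power `g^r`, `r > 1`), the module `C(f) = J_f/D_f` is torsion free over
`ℂ[t]` (with `t` acting by multiplication by `f`). -/
theorem statement7 (f : MvPolynomial (Fin 2) ℂ) (d : ℕ) (hd : 1 < d)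
    (hf : f.IsHomogeneous d)
    (hprim : ¬ ∃ (g : MvPolynomial (Fin 2) ℂ) (r : ℕ), 1 < r ∧ f = g ^ r) :
    ∀ h ∈ Ideal.span ({pderiv 0 f, pderiv 1 f} : Set (MvPolynomial (Fin 2) ℂ)),
      ∀ k : ℕ, 1 ≤ k → Dmem f (f ^ k * h) → Dmem f h := by
  have hf0 : f ≠ 0 := by
    rintro rfl
    exact hprim ⟨0, 2, one_lt_two, by ring⟩
  have main : ∀ k : ℕ, 1 ≤ k →
      ∀ h ∈ Ideal.span ({pderiv 0 f, pderiv 1 f} : Set (MvPolynomial (Fin 2) ℂ)),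
      Dmem f (f ^ k * h) → Dmem f h := by
    intro k
    induction k with
    | zero => omega
    | succ k ih =>
      intro _ h hh hD
      rcases Nat.eq_zero_or_pos k with rfl | hk1
      · rw [pow_one] at hD
        obtain ⟨g, hg⟩ := hD
        obtain ⟨g', hg'⟩ := S7aux.step hd hf hf0 hh ⟨g, hg⟩
        exact ⟨g', hg'⟩
      · have h1 : Dmem f (f ^ k * (f * h)) := by
          obtain ⟨g, hg⟩ := hD
          exact ⟨g, by rw [show f ^ k * (f * h) = f ^ (k+1) * h by ring]; exact hg⟩
        have h2 := ih hk1 (f * h) (Ideal.mul_mem_left _ f hh) h1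
        obtain ⟨g', hg'⟩ := S7aux.step hd hf hf0 hh h2
        exact ⟨g', hg'⟩
  exact fun h hh k hk hD => main k hk h hh hD
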